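/- Let P_0, P_1, …, P_k ⊂ ℝ^{n−k} be nonempty lattice polytopes and let P = P_0 ∗ P_1 ∗ ⋯ ∗ P_k ⊂ ℝⁿ be their Cayley sum. Then: (1) codeg(P) ≥ k + 1, i.e. for every integer 1 ≤ λ ≤ k, the relative interior of λP contains no lattice point; and (2) codeg(P) = k + 1 if and only if the relative interior of the Minkowski sum P_0 + P_1 + ⋯ + P_k contains a lattice point. -/

import Mathlib

open scoped Pointwise

noncomputable section

/-- A point of `ℝⁿ` is a lattice point if all its coordinates are integers. -/
def IsLatticePoint {n : ℕ} (x : Fin n → ℝ) : Prop := ∀ i, ∃ z : ℤ, x i = (z : ℝ)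

/-- A lattice polytope: the convex hull of finitely many lattice points. -/
def IsLatticePolytope {n : ℕ} (P : Set (Fin n → ℝ)) : Prop :=
  ∃ V : Finset (Fin n → ℝ), (∀ v ∈ V, IsLatticePoint v) ∧
    P = convexHull ℝ (V : Set (Fin n → ℝ))

/-- The dimension of a subset of `ℝⁿ`: the rank of the direction of its affine span. -/
def polyDim {n : ℕ} (S : Set (Fin n → ℝ)) : ℕ :=
  Module.finrank ℝ (affineSpan ℝ S).direction

/-- A face of a convex set: an extreme convex subset (this includes `∅` and the set itself). -/
def IsFace {n : ℕ} (K F : Set (Fin n → ℝ)) : Prop :=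
  IsExtreme ℝ K F ∧ Convex ℝ F

/-- The `d`-dimensional lattice volume (normalized so that a fundamental domain of the
lattice of the affine span has volume `1`, and multiplied by `d!`), computed via the
Ehrhart-type limit `d! · #(m·S ∩ ℤⁿ)/m^d`.  It is `0` if `dim S < d`. -/
def latticeVol {n : ℕ} (d : ℕ) (S : Set (Fin n → ℝ)) : ℝ :=
  Filter.limUnder Filter.atTop fun m : ℕ =>
    ((d.factorial : ℝ) * ({x ∈ (m : ℝ) • S | IsLatticePoint x}.ncard : ℝ)) / (m : ℝ) ^ d

/-- A polytope `P` contained in a cone `C` is convenient if `dim (P ∩ F) = dim F` for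
every nonempty face `F` of `C`. -/
def IsConvenient {n : ℕ} (C P : Set (Fin n → ℝ)) : Prop :=
  P ⊆ C ∧ ∀ F : Set (Fin n → ℝ), IsFace C F → F.Nonempty → polyDim (P ∩ F) = polyDim F

/-- The Newton number `ν_C(P) = Σ_F (−1)^{n−dim F} Vol_ℤ(P ∩ F)`, the sum running over
all nonempty faces `F` of the `n`-dimensional cone `C`.  (Note `(−1)^{n−dim F} = (−1)^{n+dim F}`.) -/
def newtonNumber {n : ℕ} (C P : Set (Fin n → ℝ)) : ℝ :=
  ∑ᶠ (F : Set (Fin n → ℝ)) (_ : IsFace C F ∧ F.Nonempty),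
    (-1 : ℝ) ^ (n + polyDim F) * latticeVol (polyDim F) (P ∩ F)

/-- The cone `ℝ^m_{≥0} ⊕ ℝ^{n−m} ⊂ ℝⁿ`. -/
def orthant (n m : ℕ) : Set (Fin n → ℝ) := {x | ∀ i : Fin n, (i : ℕ) < m → 0 ≤ x i}


/-- The codegree of a lattice polytope `P`: the smallest integer `λ ≥ 1` such that the
dilate `λP` contains a lattice point in its relative interior. -/
def codeg {n : ℕ} (P : Set (Fin n → ℝ)) : ℕ :=
  sInf {l : ℕ | 1 ≤ l ∧ ∃ x, IsLatticePoint x ∧ x ∈ intrinsicInterior ℝ ((l : ℝ) • P)}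

section Aux

variable {V : Type*} [NormedAddCommGroup V] [NormedSpace ℝ V]

/-- R1 : extension beyond a relative interior point. -/
theorem relint_extend {s : Set V} {x y : V} (hx : x ∈ intrinsicInterior ℝ s) (hy : y ∈ s) :
    ∃ δ : ℝ, 0 < δ ∧ x + δ • (x - y) ∈ s := by
  obtain ⟨x', hx'int, rfl⟩ := mem_intrinsicInterior.1 hx
  haveI : Nonempty (affineSpan ℝ s) := ⟨⟨y, subset_affineSpan ℝ s hy⟩⟩
  set y' : affineSpan ℝ s := ⟨y, subset_affineSpan ℝ s hy⟩ with hy'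
  have hcont : Continuous fun d : ℝ => (d • (x' -ᵥ y')) +ᵥ x' :=
    (continuous_id.fun_smul continuous_const).fun_vadd continuous_const
  have h0 : ((0:ℝ) • (x' -ᵥ y')) +ᵥ x' ∈ interior ((↑) ⁻¹' s : Set (affineSpan ℝ s)) := by
    simpa using hx'int
  have := (hcont.continuousAt (x := (0:ℝ))).preimage_mem_nhds
    (isOpen_interior.mem_nhds h0)
  obtain ⟨ε, hε, hball⟩ := Metric.mem_nhds_iff.1 this
  refine ⟨ε/2, by positivity, ?_⟩
  have hmem : ((ε/2) • (x' -ᵥ y')) +ᵥ x' ∈ interior ((↑) ⁻¹' s : Set (affineSpan ℝ s)) := by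
    apply hball
    simp only [Metric.mem_ball, Real.dist_eq, sub_zero]
    rw [abs_of_pos (by positivity : (0:ℝ) < ε/2)]
    linarith
  have hs := interior_subset hmem
  have hco : ((((ε/2) • (x' -ᵥ y')) +ᵥ x' : affineSpan ℝ s) : V)
      = ↑x' + (ε/2) • (↑x' - y) := by
    rw [AffineSubspace.coe_vadd]
    simp [vadd_eq_add, vsub_eq_sub, hy']
    abel
  simpa [hco] using hs

/-- R2 : open segment from a relative interior point to a point of `s` stays in the
relative interior. -/
theorem relint_combo {s : Set V} (hs : Convex ℝ s) {x y : V}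
    (hx : x ∈ intrinsicInterior ℝ s) (hy : y ∈ s) {θ : ℝ} (h0 : 0 < θ) (h1 : θ ≤ 1) :
    θ • x + (1 - θ) • y ∈ intrinsicInterior ℝ s := by
  obtain ⟨x', hx'int, rfl⟩ := mem_intrinsicInterior.1 hx
  haveI : Nonempty (affineSpan ℝ s) := ⟨⟨y, subset_affineSpan ℝ s hy⟩⟩
  set y' : affineSpan ℝ s := ⟨y, subset_affineSpan ℝ s hy⟩ with hy'
  set g : affineSpan ℝ s ≃ₜ affineSpan ℝ s :=
    { toFun := fun p => (θ • (p -ᵥ y')) +ᵥ y'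
      invFun := fun q => (θ⁻¹ • (q -ᵥ y')) +ᵥ y'
      left_inv := fun p => by
        simp [vadd_vsub, smul_smul, inv_mul_cancel₀ h0.ne', vsub_vadd]
      right_inv := fun q => by
        simp [vadd_vsub, smul_smul, mul_inv_cancel₀ h0.ne', vsub_vadd]
      continuous_toFun :=
        ((continuous_id.vsub continuous_const).fun_const_smul θ).fun_vadd continuous_const
      continuous_invFun :=
        ((continuous_id.vsub continuous_const).fun_const_smul θ⁻¹).fun_vadd continuous_const }
    with hg
  have himg : g '' ((↑) ⁻¹' s : Set (affineSpan ℝ s)) ⊆ ((↑) ⁻¹' s) := by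
    rintro q ⟨p, hp, rfl⟩
    have : ((((θ • (p -ᵥ y')) +ᵥ y' : affineSpan ℝ s)) : V) = θ • ↑p + (1 - θ) • y := by
      rw [AffineSubspace.coe_vadd]
      simp [vadd_eq_add, vsub_eq_sub, hy', smul_sub, sub_smul]
      abel
    show ((((θ • (p -ᵥ y')) +ᵥ y' : affineSpan ℝ s)) : V) ∈ s
    rw [this]
    exact hs hp hy h0.le (by linarith) (by ring)
  have hmem : g x' ∈ interior ((↑) ⁻¹' s : Set (affineSpan ℝ s)) := by
    apply interior_mono himg
    rw [← Homeomorph.image_interior]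
    exact Set.mem_image_of_mem _ hx'int
  refine mem_intrinsicInterior.2 ⟨g x', hmem, ?_⟩
  show ((((θ • (x' -ᵥ y')) +ᵥ y' : affineSpan ℝ s)) : V) = θ • ↑x' + (1 - θ) • y
  rw [AffineSubspace.coe_vadd]
  simp [vadd_eq_add, vsub_eq_sub, hy', smul_sub, sub_smul]
  abel

/-- CHAR ← : a point of a convex set all of whose chords extend is in the relative
interior. -/
theorem mem_relint_of_extend [FiniteDimensional ℝ V] {s : Set V} (hs : Convex ℝ s) {x : V}
    (hx : x ∈ s)
    (H : ∀ y ∈ s, ∃ δ : ℝ, 0 < δ ∧ x + δ • (x - y) ∈ s) :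
    x ∈ intrinsicInterior ℝ s := by
  obtain ⟨w, hw⟩ := Set.Nonempty.intrinsicInterior hs ⟨x, hx⟩
  obtain ⟨δ, hδ, hz⟩ := H w (intrinsicInterior_subset hw)
  have key := relint_combo hs hw hz (θ := δ/(1+δ))
    (by positivity) (by rw [div_le_one (by linarith)]; linarith)
  have : (δ/(1+δ)) • w + (1 - δ/(1+δ)) • (x + δ • (x - w)) = x := by
    have h1δ : (1:ℝ) + δ ≠ 0 := by linarith
    rw [show (1 : ℝ) - δ/(1+δ) = 1/(1+δ) by field_simp; ring]
    match_scalars <;> field_simp <;> ring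
  rwa [this] at key

/-- Scaling a relative interior point. -/
theorem relint_smul [FiniteDimensional ℝ V] {s : Set V} (hs : Convex ℝ s) {c : ℝ}
    (hc : 0 < c) {x : V} (hx : x ∈ intrinsicInterior ℝ s) :
    c • x ∈ intrinsicInterior ℝ (c • s) := by
  refine mem_relint_of_extend (hs.smul c)
    (Set.smul_mem_smul_set (intrinsicInterior_subset hx)) ?_
  rintro y ⟨y', hy', rfl⟩
  obtain ⟨δ, hδ, hz⟩ := relint_extend hx hy'
  refine ⟨δ, hδ, ?_⟩
  have : c • x + δ • (c • x - c • y') = c • (x + δ • (x - y')) := by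
    rw [← smul_sub, smul_comm, smul_add]
  rw [this]
  exact Set.smul_mem_smul_set hz

/-- If `x` is in the relative interior of `T ⊆ K` and some point of `T` is in the
relative interior of `K`, then `x` is in the relative interior of `K`. -/
theorem relint_trans [FiniteDimensional ℝ V] {K T : Set V} (hK : Convex ℝ K)
    {w x : V} (hw : w ∈ intrinsicInterior ℝ K) (hTK : T ⊆ K) (hwT : w ∈ T)
    (hx : x ∈ intrinsicInterior ℝ T) : x ∈ intrinsicInterior ℝ K := by
  obtain ⟨δ, hδ, hz⟩ := relint_extend hx hwT
  have key := relint_combo hK hw (hTK hz) (θ := δ/(1+δ))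
    (by positivity) (by rw [div_le_one (by linarith)]; linarith)
  have : (δ/(1+δ)) • w + (1 - δ/(1+δ)) • (x + δ • (x - w)) = x := by
    have h1δ : (1:ℝ) + δ ≠ 0 := by linarith
    rw [show (1 : ℝ) - δ/(1+δ) = 1/(1+δ) by field_simp; ring]
    match_scalars <;> field_simp <;> ring
  rwa [this] at key

variable {V : Type*} [AddCommGroup V] [Module ℝ V]

def comboSet {r : ℕ} (C : Fin r → Set V) : Set V :=
  {x | ∃ t : Fin r → ℝ, (∀ i, 0 ≤ t i) ∧ ∑ i, t i = 1 ∧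
    ∃ c : Fin r → V, (∀ i, c i ∈ C i) ∧ x = ∑ i, t i • c i}

theorem comboSet_convex {r : ℕ} {C : Fin r → Set V} (hC : ∀ i, Convex ℝ (C i))
    (hne : ∀ i, (C i).Nonempty) : Convex ℝ (comboSet C) := by
  rintro x ⟨t, ht0, ht1, c, hc, rfl⟩ y ⟨u, hu0, hu1, d, hd, rfl⟩ a b ha hb hab
  classical
  have hat : ∀ i, 0 ≤ a * t i := fun i => mul_nonneg ha (ht0 i)
  have hbu : ∀ i, 0 ≤ b * u i := fun i => mul_nonneg hb (hu0 i)
  refine ⟨fun i => a * t i + b * u i, fun i => add_nonneg (hat i) (hbu i), ?_, ?_⟩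
  · rw [Finset.sum_add_distrib, ← Finset.mul_sum, ← Finset.mul_sum, ht1, hu1]
    simpa using hab
  · refine ⟨fun i => if h : a * t i + b * u i = 0 then (hne i).some
      else ((a * t i)/(a * t i + b * u i)) • c i + ((b * u i)/(a * t i + b * u i)) • d i,
      fun i => ?_, ?_⟩
    · by_cases h : a * t i + b * u i = 0
      · simp only [h, dif_pos]; exact (hne i).some_mem
      · simp only [h, dif_neg, not_false_iff]
        have hsum : 0 < a * t i + b * u i :=
          lt_of_le_of_ne (add_nonneg (hat i) (hbu i)) (Ne.symm h)
        exact hC i (hc i) (hd i) (div_nonneg (hat i) hsum.le)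
          (div_nonneg (hbu i) hsum.le) (by field_simp)
    · rw [Finset.smul_sum, Finset.smul_sum, ← Finset.sum_add_distrib]
      refine Finset.sum_congr rfl fun i _ => ?_
      by_cases h : a * t i + b * u i = 0
      · have h1 : a * t i = 0 := by have := hat i; have := hbu i; linarith
        have h2 : b * u i = 0 := by have := hat i; have := hbu i; linarith
        simp [h, h1, h2, smul_smul, mul_comm]
      · simp only [h, dif_neg, not_false_iff]
        rw [smul_add, smul_smul, smul_smul, smul_smul, smul_smul]
        rw [mul_div_cancel₀ _ h, mul_div_cancel₀ _ h]

theorem hull_eq_comboSet {r : ℕ} {C : Fin r → Set V} (hC : ∀ i, Convex ℝ (C i))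
    (hne : ∀ i, (C i).Nonempty) :
    convexHull ℝ (⋃ i, C i) = comboSet C := by
  classical
  apply subset_antisymm
  · apply convexHull_min _ (comboSet_convex hC hne)
    rintro x hx
    obtain ⟨i₀, hi₀⟩ := Set.mem_iUnion.1 hx
    refine ⟨fun i => if i = i₀ then 1 else 0, fun i => by positivity, by simp, 
      fun i => if i = i₀ then x else (hne i).some, fun i => ?_, ?_⟩
    · by_cases h : i = i₀ <;> simp [h, hi₀, (hne i).some_mem]
    · rw [Finset.sum_eq_single i₀] <;> simp +contextual
  · rintro x ⟨t, ht0, ht1, c, hc, rfl⟩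
    exact (convex_convexHull ℝ _).sum_mem (fun i _ => ht0 i) ht1
      (fun i _ => subset_convexHull ℝ _ (Set.mem_iUnion.2 ⟨i, hc i⟩))

end Aux

/-- for nonempty lattice polytopes `P₀, P₁, …, P_k ⊂ ℝ^{n−k}` with Cayley
sum `P = P₀ ∗ P₁ ∗ ⋯ ∗ P_k ⊂ ℝⁿ` (here `n = m + k`, with `ℝ^{n−k}` the first `m`
coordinates): (1) `codeg(P) ≥ k + 1`, i.e. for every `1 ≤ λ ≤ k` the relative interior of
`λP` contains no lattice point; and (2) `codeg(P) = k + 1` if and only if the relative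
interior of the Minkowski sum `P₀ + P₁ + ⋯ + P_k` contains a lattice point. -/
theorem codeg_cayley {m k : ℕ}
    (P₀ : Set (Fin (m + k) → ℝ)) (Q : Fin k → Set (Fin (m + k) → ℝ))
    (hsub₀ : ∀ x ∈ P₀, ∀ i : Fin (m + k), m ≤ (i : ℕ) → x i = 0)
    (hsub : ∀ j : Fin k, ∀ x ∈ Q j, ∀ i : Fin (m + k), m ≤ (i : ℕ) → x i = 0)
    (h₀ : IsLatticePolytope P₀) (h₀ne : P₀.Nonempty)
    (hQ : ∀ j, IsLatticePolytope (Q j) ∧ (Q j).Nonempty)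
    (P : Set (Fin (m + k) → ℝ))
    (hPdef : P = convexHull ℝ
      (P₀ ∪ ⋃ j : Fin k, (fun v => v + Pi.single (Fin.natAdd m j) (1 : ℝ)) '' Q j)) :
    (∀ l : ℕ, 1 ≤ l → l ≤ k →
        ¬ ∃ x, IsLatticePoint x ∧ x ∈ intrinsicInterior ℝ ((l : ℝ) • P)) ∧
    (codeg P = k + 1 ↔ ∃ x, IsLatticePoint x ∧ x ∈ intrinsicInterior ℝ
        {y | ∃ p ∈ P₀, ∃ f : Fin k → (Fin (m + k) → ℝ),
          (∀ j, f j ∈ Q j) ∧ y = p + ∑ j, f j}) := by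
  classical
  set ee : Fin k → (Fin (m + k) → ℝ) := fun j => Pi.single (Fin.natAdd m j) (1 : ℝ) with hee
  set T : Fin k → Set (Fin (m + k) → ℝ) := fun j => (fun v => v + ee j) '' Q j with hT
  set C : Fin (k + 1) → Set (Fin (m + k) → ℝ) := Fin.cases P₀ T with hCdef
  have hnatAdd_inj : ∀ j j' : Fin k, Fin.natAdd m j = Fin.natAdd m j' ↔ j = j' := by
    intro j j'
    rw [Fin.ext_iff, Fin.ext_iff]
    simp [Fin.natAdd]
  have hee_apply : ∀ j j' : Fin k, ee j' (Fin.natAdd m j) = if j' = j then 1 else 0 := by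
    intro j j'
    rw [hee]
    simp only [Pi.single_apply]
    by_cases h : j' = j
    · subst h; simp
    · rw [if_neg h, if_neg (fun hEq => h ((hnatAdd_inj _ _).1 hEq).symm)]
  have hgen0 : ∀ g ∈ P₀, ∀ j : Fin k, g (Fin.natAdd m j) = 0 := by
    intro g hg j
    exact hsub₀ g hg _ (by simp [Fin.natAdd])
  have hgenQ : ∀ j' : Fin k, ∀ q ∈ Q j', ∀ j : Fin k, q (Fin.natAdd m j) = 0 := by
    intro j' q hq j
    exact hsub j' q hq _ (by simp [Fin.natAdd])
  have hgenT : ∀ j' : Fin k, ∀ g ∈ T j', ∀ j : Fin k,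
      g (Fin.natAdd m j) = if j' = j then 1 else 0 := by
    rintro j' g ⟨q, hq, rfl⟩ j
    simp only [Pi.add_apply]
    rw [hgenQ j' q hq j, hee_apply, zero_add]
  have hC0 : C 0 = P₀ := rfl
  have hCsucc : ∀ j : Fin k, C j.succ = T j := fun j => by
    rw [hCdef]; simp
  have hCconv : ∀ i, Convex ℝ (C i) := by
    intro i
    rcases Fin.eq_zero_or_eq_succ i with rfl | ⟨j, rfl⟩
    · rw [hC0]
      obtain ⟨W, -, hW⟩ := h₀
      rw [hW]; exact convex_convexHull ℝ _
    · rw [hCsucc]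
      obtain ⟨W, -, hW⟩ := (hQ j).1
      have : Convex ℝ (Q j) := by rw [hW]; exact convex_convexHull ℝ _
      have himg : T j = (fun v => ee j + v) '' Q j := by
        rw [hT]
        exact Set.image_congr fun v _ => add_comm v (ee j)
      rw [himg]
      exact this.translate (ee j)
  have hCne : ∀ i, (C i).Nonempty := by
    intro i
    rcases Fin.eq_zero_or_eq_succ i with rfl | ⟨j, rfl⟩
    · exact h₀ne
    · rw [hCsucc]
      exact ⟨(hQ j).2.some + ee j, ⟨(hQ j).2.some, (hQ j).2.some_mem, rfl⟩⟩
  have hPC : P = comboSet C := by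
    rw [hPdef, ← hull_eq_comboSet hCconv hCne]
    congr 1
    apply subset_antisymm
    · apply Set.union_subset
      · exact Set.subset_iUnion_of_subset 0 (by rw [hC0])
      · exact Set.iUnion_subset fun j =>
          Set.subset_iUnion_of_subset j.succ (by rw [hCsucc])
    · apply Set.iUnion_subset
      intro i
      rcases Fin.eq_zero_or_eq_succ i with rfl | ⟨j, rfl⟩
      · rw [hC0]; exact Set.subset_union_left
      · rw [hCsucc]
        exact (Set.subset_iUnion T j).trans Set.subset_union_right
  have hrep_coord : ∀ (t : Fin (k + 1) → ℝ) (c : Fin (k + 1) → (Fin (m + k) → ℝ)),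
      (∀ i, c i ∈ C i) → ∀ j : Fin k,
      (∑ i, t i • c i) (Fin.natAdd m j) = t j.succ := by
    intro t c hc j
    rw [Finset.sum_apply]
    have hterm : ∀ i : Fin (k + 1),
        (t i • c i) (Fin.natAdd m j) = if i = j.succ then t i else 0 := by
      intro i
      rcases Fin.eq_zero_or_eq_succ i with rfl | ⟨j', rfl⟩
      · have := hc 0; rw [hC0] at this
        simp [hgen0 _ this j, (Fin.succ_ne_zero j).symm]
      · have := hc j'.succ; rw [hCsucc] at this
        simp only [Pi.smul_apply, smul_eq_mul, hgenT j' _ this j, Fin.succ_inj]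
        by_cases h : j' = j <;> simp [h]
    rw [Finset.sum_congr rfl fun i _ => hterm i]
    simp
  have hcoords : ∀ x ∈ P, (∀ j : Fin k, 0 ≤ x (Fin.natAdd m j)) ∧
      ∑ j : Fin k, x (Fin.natAdd m j) ≤ 1 := by
    intro x hx
    rw [hPC] at hx
    obtain ⟨t, ht0, ht1, c, hc, rfl⟩ := hx
    constructor
    · intro j; rw [hrep_coord t c hc j]; exact ht0 _
    · calc ∑ j : Fin k, (∑ i, t i • c i) (Fin.natAdd m j)
          = ∑ j : Fin k, t j.succ :=
            Finset.sum_congr rfl fun j _ => hrep_coord t c hc j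
        _ ≤ t 0 + ∑ j : Fin k, t j.succ := le_add_of_nonneg_left (ht0 0)
        _ = 1 := by rw [← Fin.sum_univ_succ t, ht1]
  have hPconv : Convex ℝ P := by rw [hPdef]; exact convex_convexHull ℝ _
  have hPne : P.Nonempty := by
    refine ⟨h₀ne.some, ?_⟩
    rw [hPdef]
    exact subset_convexHull ℝ _ (Or.inl h₀ne.some_mem)
  have hKcoords : ∀ ρ : ℝ, 0 ≤ ρ → ∀ x ∈ ρ • P,
      (∀ j : Fin k, 0 ≤ x (Fin.natAdd m j)) ∧
      ∑ j : Fin k, x (Fin.natAdd m j) ≤ ρ := by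
    rintro ρ hρ x ⟨x', hx', rfl⟩
    obtain ⟨h1, h2⟩ := hcoords x' hx'
    constructor
    · intro j
      simp only [Pi.smul_apply, smul_eq_mul]
      exact mul_nonneg hρ (h1 j)
    · simp only [Pi.smul_apply, smul_eq_mul, ← Finset.mul_sum]
      calc ρ * ∑ j : Fin k, x' (Fin.natAdd m j) ≤ ρ * 1 :=
            mul_le_mul_of_nonneg_left h2 hρ
        _ = ρ := mul_one ρ
  have hQmemP : ∀ j : Fin k, (hQ j).2.some + ee j ∈ P := by
    intro j
    rw [hPdef]
    exact subset_convexHull ℝ _ (Or.inr (Set.mem_iUnion.2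
      ⟨j, ⟨(hQ j).2.some, (hQ j).2.some_mem, rfl⟩⟩))
  have hP0memP : ∀ p ∈ P₀, p ∈ P := by
    intro p hp
    rw [hPdef]
    exact subset_convexHull ℝ _ (Or.inl hp)
  have hstrict : ∀ ρ : ℝ, 0 < ρ → ∀ x ∈ intrinsicInterior ℝ (ρ • P),
      (∀ j : Fin k, 0 < x (Fin.natAdd m j)) ∧
      ∑ j : Fin k, x (Fin.natAdd m j) < ρ := by
    intro ρ hρ x hx
    have hxP := intrinsicInterior_subset hx
    obtain ⟨hge, hsum⟩ := hKcoords ρ hρ.le x hxP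
    constructor
    · intro j
      rcases lt_or_eq_of_le (hge j) with h | h
      · exact h
      · exfalso
        have hy : ρ • ((hQ j).2.some + ee j) ∈ ρ • P :=
          Set.smul_mem_smul_set (hQmemP j)
        obtain ⟨δ, hδ, hz⟩ := relint_extend hx hy
        have hzc := (hKcoords ρ hρ.le _ hz).1 j
        have heq : (x + δ • (x - ρ • ((hQ j).2.some + ee j))) (Fin.natAdd m j)
            = -(δ * ρ) := by
          simp only [Pi.add_apply, Pi.smul_apply, Pi.sub_apply, smul_eq_mul]
          rw [hgenQ j _ (hQ j).2.some_mem j, hee_apply, if_pos rfl, ← h]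
          ring
        rw [heq] at hzc
        nlinarith
    · rcases lt_or_eq_of_le hsum with h | h
      · exact h
      · exfalso
        have hy : ρ • h₀ne.some ∈ ρ • P :=
          Set.smul_mem_smul_set (hP0memP _ h₀ne.some_mem)
        obtain ⟨δ, hδ, hz⟩ := relint_extend hx hy
        have hzc := (hKcoords ρ hρ.le _ hz).2
        have heq : ∑ j : Fin k, (x + δ • (x - ρ • h₀ne.some)) (Fin.natAdd m j)
            = (1 + δ) * ρ := by
          have hterm : ∀ j : Fin k, (x + δ • (x - ρ • h₀ne.some)) (Fin.natAdd m j)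
              = (1 + δ) * x (Fin.natAdd m j) := by
            intro j
            simp only [Pi.add_apply, Pi.smul_apply, Pi.sub_apply, smul_eq_mul]
            rw [hgen0 _ h₀ne.some_mem j]
            ring
          rw [Finset.sum_congr rfl fun j _ => hterm j, ← Finset.mul_sum, h]
        rw [heq] at hzc
        nlinarith
  -- Part 1
  have hpart1 : ∀ l : ℕ, 1 ≤ l → l ≤ k →
      ¬ ∃ x, IsLatticePoint x ∧ x ∈ intrinsicInterior ℝ ((l : ℝ) • P) := by
    rintro l h1l hlk ⟨x, hlat, hint⟩
    have hl0 : (0:ℝ) < (l:ℝ) := by exact_mod_cast h1l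
    obtain ⟨hpos, hsum⟩ := hstrict (l:ℝ) hl0 x hint
    have hone : ∀ j : Fin k, (1:ℝ) ≤ x (Fin.natAdd m j) := by
      intro j
      obtain ⟨z, hz⟩ := hlat (Fin.natAdd m j)
      have h1 : (0:ℝ) < (z:ℝ) := hz ▸ hpos j
      have h2 : 1 ≤ z := by exact_mod_cast h1
      rw [hz]; exact_mod_cast h2
    have hk : (k:ℝ) ≤ ∑ j : Fin k, x (Fin.natAdd m j) := by
      calc (k:ℝ) = ∑ _j : Fin k, (1:ℝ) := by simp
        _ ≤ _ := Finset.sum_le_sum fun j _ => hone j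
    have hlk' : (l:ℝ) ≤ (k:ℝ) := by exact_mod_cast hlk
    linarith
  refine ⟨hpart1, ?_⟩
  set Mink : Set (Fin (m + k) → ℝ) := {y | ∃ p ∈ P₀, ∃ f : Fin k → (Fin (m + k) → ℝ),
      (∀ j, f j ∈ Q j) ∧ y = p + ∑ j, f j} with hMinkdef
  set cvec : Fin (m + k) → ℝ := ∑ j, ee j with hcvecdef
  set A : Set (Fin (m + k) → ℝ) := {y | ∀ j : Fin k, y (Fin.natAdd m j) = 1} with hAdef
  have hρpos : (0:ℝ) < ((k + 1 : ℕ) : ℝ) := by positivity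
  have hρ1 : ((k + 1 : ℕ) : ℝ) = (k : ℝ) + 1 := by push_cast; ring
  have hcvec_coord : ∀ j : Fin k, cvec (Fin.natAdd m j) = 1 := by
    intro j
    rw [hcvecdef, Finset.sum_apply]
    rw [Finset.sum_congr rfl fun j' _ => hee_apply j j']
    simp
  have hcvec_lat : IsLatticePoint cvec := by
    intro i
    refine ⟨∑ j, if i = Fin.natAdd m j then (1:ℤ) else 0, ?_⟩
    rw [hcvecdef, Finset.sum_apply]
    push_cast
    refine Finset.sum_congr rfl fun j _ => ?_
    by_cases h : i = Fin.natAdd m j <;> simp [hee, Pi.single_apply, h]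
  have hlat_add : ∀ x y : Fin (m + k) → ℝ, IsLatticePoint x → IsLatticePoint y →
      IsLatticePoint (x + y) := by
    rintro x y hx hy i
    obtain ⟨a, ha⟩ := hx i; obtain ⟨b, hb⟩ := hy i
    exact ⟨a + b, by rw [Pi.add_apply, ha, hb]; push_cast; ring⟩
  have hlat_sub : ∀ x y : Fin (m + k) → ℝ, IsLatticePoint x → IsLatticePoint y →
      IsLatticePoint (x - y) := by
    rintro x y hx hy i
    obtain ⟨a, ha⟩ := hx i; obtain ⟨b, hb⟩ := hy i
    exact ⟨a - b, by rw [Pi.sub_apply, ha, hb]; push_cast; ring⟩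
  have hAconv : Convex ℝ A := by
    rintro a ha b hb s t hs ht hst j
    simp only [Pi.add_apply, Pi.smul_apply, smul_eq_mul]
    rw [ha j, hb j]; linarith
  have hKconv : Convex ℝ (((k + 1 : ℕ) : ℝ) • P) := hPconv.smul _
  -- the slice identity
  have hρne : ((k + 1 : ℕ) : ℝ) ≠ 0 := hρpos.ne'
  have hKA_eq : (((k + 1 : ℕ) : ℝ) • P) ∩ A = (fun v => v + cvec) '' Mink := by
    apply subset_antisymm
    · rintro x ⟨hxK, hxA⟩
      obtain ⟨x', hx'P, rfl⟩ := hxK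
      rw [hPC] at hx'P
      obtain ⟨t, ht0, ht1, c, hc, rfl⟩ := hx'P
      have hco : ∀ j : Fin k, ((k + 1 : ℕ) : ℝ) * t j.succ = 1 := by
        intro j
        have hj := hxA j
        simp only [Pi.smul_apply, smul_eq_mul] at hj
        rwa [hrep_coord t c hc j] at hj
      have htsucc : ∀ j : Fin k, t j.succ = 1 / ((k + 1 : ℕ) : ℝ) := by
        intro j
        rw [eq_div_iff hρne]
        linarith [hco j]
      have ht0eq : t 0 = 1 / ((k + 1 : ℕ) : ℝ) := by
        have hs := Fin.sum_univ_succ t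
        rw [ht1, Finset.sum_congr rfl (fun j _ => htsucc j), Finset.sum_const,
          Finset.card_univ, Fintype.card_fin, nsmul_eq_mul] at hs
        rw [hρ1] at hs ⊢
        have hk1 : (k : ℝ) + 1 ≠ 0 := by positivity
        field_simp at hs ⊢
        linarith
      have hteq : ∀ i, t i = 1 / ((k + 1 : ℕ) : ℝ) := by
        intro i
        rcases Fin.eq_zero_or_eq_succ i with rfl | ⟨j, rfl⟩
        · exact ht0eq
        · exact htsucc j
      have hcs : ∀ j : Fin k, ∃ q ∈ Q j, q + ee j = c j.succ := by
        intro j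
        have hj := hc j.succ
        rw [hCsucc] at hj
        obtain ⟨qq, hq, hqe⟩ := hj
        exact ⟨qq, hq, hqe⟩
      choose q hqmem hqe using hcs
      have hc0 : c 0 ∈ P₀ := by rw [← hC0]; exact hc 0
      refine ⟨c 0 + ∑ j, q j, ⟨c 0, hc0, q, hqmem, rfl⟩, ?_⟩
      show c 0 + ∑ j, q j + cvec = ((k + 1 : ℕ) : ℝ) • ∑ i, t i • c i
      rw [Finset.smul_sum]
      have hci : ∀ i, ((k + 1 : ℕ) : ℝ) • (t i • c i) = c i := by
        intro i
        rw [smul_smul, hteq i, mul_one_div, div_self hρne, one_smul]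
      rw [Finset.sum_congr rfl fun i _ => hci i, Fin.sum_univ_succ,
        Finset.sum_congr rfl fun j (_ : j ∈ Finset.univ) => (hqe j).symm,
        Finset.sum_add_distrib, ← hcvecdef]
      abel
    · rintro x ⟨v, ⟨p, hp, f, hf, rfl⟩, rfl⟩
      have hcimem : ∀ i, Fin.cases (motive := fun _ => Fin (m + k) → ℝ)
          p (fun j => f j + ee j) i ∈ C i := by
        intro i
        rcases Fin.eq_zero_or_eq_succ i with rfl | ⟨j, rfl⟩
        · rw [hC0]; simpa using hp
        · rw [hCsucc]
          simp only [Fin.cases_succ]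
          exact ⟨f j, hf j, rfl⟩
      have hsmul : ((k + 1 : ℕ) : ℝ) • ∑ i, (((k + 1 : ℕ) : ℝ))⁻¹ •
          (Fin.cases (motive := fun _ => Fin (m + k) → ℝ) p (fun j => f j + ee j) i)
          = p + ∑ j, f j + cvec := by
        rw [Finset.smul_sum]
        have hci : ∀ i : Fin (k + 1), ((k + 1 : ℕ) : ℝ) • ((((k + 1 : ℕ) : ℝ))⁻¹ •
            (Fin.cases (motive := fun _ => Fin (m + k) → ℝ) p (fun j => f j + ee j) i))
            = Fin.cases (motive := fun _ => Fin (m + k) → ℝ) p (fun j => f j + ee j) i := by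
          intro i
          rw [smul_smul, mul_inv_cancel₀ hρne, one_smul]
        rw [Finset.sum_congr rfl fun i _ => hci i, Fin.sum_univ_succ]
        simp only [Fin.cases_zero, Fin.cases_succ]
        rw [Finset.sum_add_distrib, ← hcvecdef]
        abel
      constructor
      · refine ⟨∑ i, (((k + 1 : ℕ) : ℝ))⁻¹ •
          (Fin.cases (motive := fun _ => Fin (m + k) → ℝ) p (fun j => f j + ee j) i), ?_, hsmul⟩
        rw [hPC]
        refine ⟨fun _ => (((k + 1 : ℕ) : ℝ))⁻¹, fun i => by positivity, ?_, _, hcimem, rfl⟩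
        rw [Finset.sum_const, Finset.card_univ, Fintype.card_fin, nsmul_eq_mul,
          mul_inv_cancel₀ hρne]
      · intro j
        show (p + ∑ j', f j' + cvec) (Fin.natAdd m j) = 1
        simp only [Pi.add_apply, Finset.sum_apply]
        rw [hgen0 p hp j, hcvec_coord j,
          Finset.sum_congr rfl fun j' (_ : j' ∈ Finset.univ) => hgenQ j' (f j') (hf j') j]
        simp
  -- translation of the relative interior
  have hIso : intrinsicInterior ℝ ((fun v => v + cvec) '' Mink)
      = (fun v => v + cvec) '' intrinsicInterior ℝ Mink := by
    have h1 : (fun v => v + cvec) '' Mink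
        = (AffineIsometryEquiv.constVAdd ℝ (Fin (m + k) → ℝ) cvec).toAffineIsometry '' Mink := by
      refine Set.image_congr fun v _ => ?_
      simp [AffineIsometryEquiv.constVAdd, vadd_eq_add, add_comm]
      exact add_comm _ _
    have h2 := AffineIsometry.image_intrinsicInterior
      (AffineIsometryEquiv.constVAdd ℝ (Fin (m + k) → ℝ) cvec).toAffineIsometry Mink
    rw [h1, h2]
    refine (Set.image_congr fun v _ => ?_).symm
    simp [AffineIsometryEquiv.constVAdd, vadd_eq_add, add_comm]
    exact add_comm _ _
  -- equivalence with lattice point in the relint of the (k+1)-dilate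
  have hmain : (∃ x, IsLatticePoint x ∧ x ∈ intrinsicInterior ℝ (((k + 1 : ℕ) : ℝ) • P))
      ↔ ∃ x, IsLatticePoint x ∧ x ∈ intrinsicInterior ℝ Mink := by
    constructor
    · rintro ⟨x, hlat, hint⟩
      obtain ⟨hpos, hsum⟩ := hstrict _ hρpos x hint
      have hxA : x ∈ A := by
        choose z hz using fun j => hlat (Fin.natAdd m j)
        have h1 : ∀ j, 1 ≤ z j := by
          intro j
          have := hpos j
          rw [hz j] at this
          exact_mod_cast this
        have hsz : (∑ j, z j) ≤ (k : ℤ) := by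
          have hr : ((∑ j, z j : ℤ) : ℝ) < (k : ℝ) + 1 := by
            push_cast
            rw [Finset.sum_congr rfl fun j _ => (hz j).symm]
            rw [hρ1] at hsum
            exact hsum
          have h2 : (∑ j, z j) < (k : ℤ) + 1 := by exact_mod_cast hr
          omega
        have hz1 : ∀ j, z j = 1 := by
          intro j
          by_contra hne
          have h2 : 2 ≤ z j := by have := h1 j; omega
          have : (k : ℤ) < ∑ j, z j := by
            calc (k : ℤ) = ∑ _j : Fin k, (1 : ℤ) := by simp
              _ < ∑ j, z j := Finset.sum_lt_sum (fun i _ => h1 i)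
                  ⟨j, Finset.mem_univ j, by omega⟩
          omega
        intro j
        rw [hz j]
        exact_mod_cast hz1 j
      have hxKA : x ∈ intrinsicInterior ℝ ((((k + 1 : ℕ) : ℝ) • P) ∩ A) := by
        refine mem_relint_of_extend (hKconv.inter hAconv)
          ⟨intrinsicInterior_subset hint, hxA⟩ ?_
        rintro y ⟨hyK, hyA⟩
        obtain ⟨δ, hδ, hz⟩ := relint_extend hint hyK
        refine ⟨δ, hδ, hz, fun j => ?_⟩
        simp only [Pi.add_apply, Pi.smul_apply, Pi.sub_apply, smul_eq_mul]
        rw [hxA j, hyA j]; ring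
      rw [hKA_eq, hIso] at hxKA
      obtain ⟨v, hv, rfl⟩ := hxKA
      refine ⟨v, ?_, hv⟩
      have : v = (v + cvec) - cvec := by abel
      rw [this]
      exact hlat_sub _ _ hlat hcvec_lat
    · rintro ⟨v, hlat, hint⟩
      have hx0 : v + cvec ∈ intrinsicInterior ℝ ((((k + 1 : ℕ) : ℝ) • P) ∩ A) := by
        rw [hKA_eq, hIso]
        exact Set.mem_image_of_mem _ hint
      -- construct a relative interior point of the dilate lying in the slice
      obtain ⟨w, hwint, hwA⟩ :
          ∃ w, w ∈ intrinsicInterior ℝ (((k + 1 : ℕ) : ℝ) • P) ∧ w ∈ A := by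
        obtain ⟨u₀, hu₀⟩ := Set.Nonempty.intrinsicInterior hPconv hPne
        have honeP : (1 : ℝ) • P = P := by
          ext x
          constructor
          · rintro ⟨y, hy, rfl⟩; simpa using hy
          · intro hx; exact ⟨x, hx, one_smul ℝ x⟩
        have hu₀1 : u₀ ∈ intrinsicInterior ℝ ((1 : ℝ) • P) := by rwa [honeP]
        obtain ⟨hapos, hasum⟩ := hstrict 1 one_pos u₀ hu₀1
        have hk0 : (0:ℝ) ≤ (k:ℝ) := Nat.cast_nonneg k
        have hk1 : (0:ℝ) < (k:ℝ) + 1 := by linarith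
        set θ : ℝ := 1 / (2 * ((k:ℝ) + 1)) with hθdef
        have hθpos : 0 < θ := by rw [hθdef]; positivity
        have hθlt : θ < 1 := by
          rw [hθdef, div_lt_one (by positivity)]
          linarith
        have h1θ : (0:ℝ) < 1 - θ := by linarith
        have haj_le : ∀ j : Fin k, u₀ (Fin.natAdd m j) ≤ ∑ j', u₀ (Fin.natAdd m j') :=
          fun j => Finset.single_le_sum (fun i _ => (hapos i).le) (Finset.mem_univ j)
        have hσ0 : 0 ≤ ∑ j', u₀ (Fin.natAdd m j') :=
          Finset.sum_nonneg fun i _ => (hapos i).le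
        have hθle : θ ≤ 1 / ((k:ℝ) + 1) := by
          rw [hθdef, div_le_div_iff₀ (by positivity) hk1]
          linarith
        set s : Fin k → ℝ :=
          fun j => (1/((k:ℝ)+1) - θ * u₀ (Fin.natAdd m j))/(1-θ) with hsdef
        have hs0 : ∀ j, 0 ≤ s j := by
          intro j
          apply div_nonneg _ h1θ.le
          have haj1 : u₀ (Fin.natAdd m j) ≤ 1 := le_trans (haj_le j) hasum.le
          have h2 : θ * u₀ (Fin.natAdd m j) ≤ θ * 1 :=
            mul_le_mul_of_nonneg_left haj1 hθpos.le
          rw [sub_nonneg]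
          calc θ * u₀ (Fin.natAdd m j) ≤ θ * 1 := h2
            _ = θ := mul_one θ
            _ ≤ 1/((k:ℝ)+1) := hθle
        have hssum : ∑ j, s j ≤ 1 := by
          have e1 : ∑ j, s j
              = ((k:ℝ)/((k:ℝ)+1) - θ * ∑ j', u₀ (Fin.natAdd m j'))/(1-θ) := by
            rw [hsdef, ← Finset.sum_div]
            congr 1
            rw [Finset.sum_sub_distrib, Finset.sum_const, Finset.card_univ,
              Fintype.card_fin, nsmul_eq_mul, ← Finset.mul_sum]
            ring
          rw [e1, div_le_one h1θ]
          have key : θ * (1 - ∑ j', u₀ (Fin.natAdd m j')) ≤ 1/((k:ℝ)+1) := by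
            calc θ * (1 - ∑ j', u₀ (Fin.natAdd m j')) ≤ θ * 1 :=
                mul_le_mul_of_nonneg_left (by linarith) hθpos.le
              _ = θ := mul_one θ
              _ ≤ 1/((k:ℝ)+1) := hθle
          have hkk : (k:ℝ)/((k:ℝ)+1) = 1 - 1/((k:ℝ)+1) := by field_simp; ring
          rw [hkk]
          nlinarith [key]
        set cc : Fin (k+1) → (Fin (m + k) → ℝ) :=
          Fin.cases h₀ne.some (fun j => (hQ j).2.some + ee j) with hccdef
        have hccmem : ∀ i, cc i ∈ C i := by
          intro i
          rcases Fin.eq_zero_or_eq_succ i with rfl | ⟨j, rfl⟩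
          · rw [hC0, hccdef]; simpa using h₀ne.some_mem
          · rw [hCsucc, hccdef]
            simp only [Fin.cases_succ]
            exact ⟨(hQ j).2.some, (hQ j).2.some_mem, rfl⟩
        set tt : Fin (k+1) → ℝ := Fin.cases (1 - ∑ j, s j) s with httdef
        have htt0 : ∀ i, 0 ≤ tt i := by
          intro i
          rcases Fin.eq_zero_or_eq_succ i with rfl | ⟨j, rfl⟩
          · rw [httdef]; simpa using by linarith [hssum]
          · rw [httdef]; simpa using hs0 j
        have httsum : ∑ i, tt i = 1 := by
          rw [Fin.sum_univ_succ, httdef]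
          simp
        have hyP : (∑ i, tt i • cc i) ∈ P := by
          rw [hPC]
          exact ⟨tt, htt0, httsum, cc, hccmem, rfl⟩
        have hycoord : ∀ j : Fin k, (∑ i, tt i • cc i) (Fin.natAdd m j) = s j := by
          intro j
          rw [hrep_coord tt cc hccmem j, httdef]
          simp
        have huw := relint_combo hPconv hu₀ hyP hθpos hθlt.le
        refine ⟨((k + 1 : ℕ) : ℝ) • (θ • u₀ + (1-θ) • ∑ i, tt i • cc i),
          relint_smul hPconv hρpos huw, ?_⟩
        intro j
        show (((k + 1 : ℕ) : ℝ) • (θ • u₀ + (1-θ) • ∑ i, tt i • cc i)) (Fin.natAdd m j) = 1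
        simp only [Pi.smul_apply, Pi.add_apply, smul_eq_mul]
        rw [hycoord j, hsdef]
        rw [mul_div_cancel₀ _ h1θ.ne', hρ1]
        field_simp
        ring
      refine ⟨v + cvec, hlat_add _ _ hlat hcvec_lat, ?_⟩
      exact relint_trans hKconv hwint Set.inter_subset_left
        ⟨intrinsicInterior_subset hwint, hwA⟩ hx0
  -- codegree bookkeeping
  rw [← hmain]
  unfold codeg
  constructor
  · intro h
    have hne : {l : ℕ | 1 ≤ l ∧ ∃ x, IsLatticePoint x ∧
        x ∈ intrinsicInterior ℝ ((l : ℝ) • P)}.Nonempty := by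
      by_contra h'
      rw [Set.not_nonempty_iff_eq_empty] at h'
      rw [h', Nat.sInf_empty] at h
      omega
    have hmem := Nat.sInf_mem hne
    rw [h] at hmem
    exact hmem.2
  · intro hR
    have hmem : k + 1 ∈ {l : ℕ | 1 ≤ l ∧ ∃ x, IsLatticePoint x ∧
        x ∈ intrinsicInterior ℝ ((l : ℝ) • P)} := ⟨by omega, hR⟩
    have hne : {l : ℕ | 1 ≤ l ∧ ∃ x, IsLatticePoint x ∧
        x ∈ intrinsicInterior ℝ ((l : ℝ) • P)}.Nonempty := ⟨_, hmem⟩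
    have hle := Nat.sInf_le hmem
    obtain ⟨h1, x, hx⟩ := Nat.sInf_mem hne
    by_contra hne'
    have hlek : sInf {l : ℕ | 1 ≤ l ∧ ∃ x, IsLatticePoint x ∧
        x ∈ intrinsicInterior ℝ ((l : ℝ) • P)} ≤ k := by omega
    exact hpart1 _ h1 hlek ⟨x, hx⟩

end
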